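/- arXiv:2502.19542 — 2 statements merged into one kernel-verified Lean document; each statement's English description precedes it below -/
import Mathlib

section
/- Let S ⊆ ℤ × ℤ, let p_1, p_2 ∈ ℕ, and let i, j ∈ S with |i_k − j_k| ≤ p_k + 1 for k = 1,2. Suppose S is axis-filling on the interaction box intersection B(i,j), and suppose there exists a chain in S between i and j all of whose points lie in B(i,j). Then there exists a shortest chain in S between i and j. -/
/-- The ℓ¹-norm on ℤ × ℤ. -/
def lnorm (x : ℤ × ℤ) : ℤ := |x.1| + |x.2|

/-- The `k`-th coordinate of a point of ℤ × ℤ, for `k : Fin 2`. -/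
def coord2 (x : ℤ × ℤ) : Fin 2 → ℤ := ![x.1, x.2]

/-- The `k`-th standard basis vector of ℤ × ℤ. -/
def deltaV : Fin 2 → ℤ × ℤ := ![(1, 0), (0, 1)]

/-- `t 0, t 1, …, t r` is a chain in `S` between `i` and `j`:
all points are in `S`, the endpoints are `i` and `j`, and consecutive points
are at ℓ¹-distance 1. `r` is the length of the chain. -/
def ChainIn (S : Set (ℤ × ℤ)) (t : ℕ → ℤ × ℤ) (r : ℕ) (i j : ℤ × ℤ) : Prop :=
  t 0 = i ∧ t r = j ∧ (∀ l, l ≤ r → t l ∈ S) ∧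
    ∀ l, 1 ≤ l → l ≤ r → lnorm (t l - t (l - 1)) = 1

/-- A shortest chain: a chain whose length equals `‖j - i‖₁`. -/
def ShortestChainIn (S : Set (ℤ × ℤ)) (t : ℕ → ℤ × ℤ) (r : ℕ) (i j : ℤ × ℤ) : Prop :=
  ChainIn S t r i j ∧ (r : ℤ) = lnorm (j - i)

/-- A direction-`k` chain between `i` and `j` exists in `S`: every lattice point
agreeing with `i` off direction `k` and with `k`-th coordinate strictly between
those of `i` and `j` belongs to `S`. -/
def DirChainExists (S : Set (ℤ × ℤ)) (k : Fin 2) (i j : ℤ × ℤ) : Prop :=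
  ∀ r : ℤ × ℤ, (∀ k' : Fin 2, k' ≠ k → coord2 r k' = coord2 i k') →
    min (coord2 i k) (coord2 j k) < coord2 r k →
    coord2 r k < max (coord2 i k) (coord2 j k) → r ∈ S

/-- `i` is resolved in direction `k` if both `i + δ_k` and `i - δ_k` belong to `S`. -/
def Resolved (S : Set (ℤ × ℤ)) (k : Fin 2) (i : ℤ × ℤ) : Prop :=
  i + deltaV k ∈ S ∧ i - deltaV k ∈ S

/-- `t` lies on the axis-parallel segment (in direction `k`) from `i` to `j`. -/
def OnSegment (k : Fin 2) (i j t : ℤ × ℤ) : Prop :=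
  (∀ k' : Fin 2, k' ≠ k → coord2 t k' = coord2 i k') ∧
    min (coord2 i k) (coord2 j k) ≤ coord2 t k ∧
    coord2 t k ≤ max (coord2 i k) (coord2 j k)

/-- There is an L-chain in `S` between `i` and `j` with corner element `c`:
a direction-`k₁` chain between `i` and `c` followed by a direction-`k₂` chain
between `c` and `j`, with `k₁ ≠ k₂`. -/
def IsLChain (S : Set (ℤ × ℤ)) (i c j : ℤ × ℤ) (k₁ k₂ : Fin 2) : Prop :=
  k₁ ≠ k₂ ∧ i ∈ S ∧ c ∈ S ∧ j ∈ S ∧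
    (∀ k' : Fin 2, k' ≠ k₁ → coord2 i k' = coord2 c k') ∧ DirChainExists S k₁ i c ∧
    (∀ k' : Fin 2, k' ≠ k₂ → coord2 c k' = coord2 j k') ∧ DirChainExists S k₂ c j

/-- `t` is an element of the L-chain between `i` and `j` with corner `c`. -/
def InLChain (i c j : ℤ × ℤ) (k₁ k₂ : Fin 2) (t : ℤ × ℤ) : Prop :=
  OnSegment k₁ i c t ∨ OnSegment k₂ c j t

/-- The interaction box intersection `B(i,j)` for degrees `p₁, p₂`. -/
def interBox (p₁ p₂ : ℕ) (i j : ℤ × ℤ) : Set (ℤ × ℤ) :=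
  {r | |i.1 - r.1| ≤ (p₁ : ℤ) + 1 ∧ |i.2 - r.2| ≤ (p₂ : ℤ) + 1 ∧
       |j.1 - r.1| ≤ (p₁ : ℤ) + 1 ∧ |j.2 - r.2| ≤ (p₂ : ℤ) + 1}

/-- `S` is axis-filling on `A`: whenever `l, t ∈ S ∩ A` agree in some coordinate `k`,
every lattice point with the same `k`-th coordinate and with the other coordinate
strictly between those of `l` and `t` belongs to `S`. -/
def AxisFilling (S A : Set (ℤ × ℤ)) : Prop :=
  ∀ l t : ℤ × ℤ, l ∈ S → l ∈ A → t ∈ S → t ∈ A →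
    ∀ k : Fin 2, coord2 l k = coord2 t k →
      ∀ r : ℤ × ℤ, coord2 r k = coord2 l k →
        (∀ k' : Fin 2, k' ≠ k → min (coord2 l k') (coord2 t k') < coord2 r k' ∧
          coord2 r k' < max (coord2 l k') (coord2 t k')) → r ∈ S

lemma lnorm_natAbs (x y : ℤ × ℤ) :
    lnorm (x - y) = ((x.1 - y.1).natAbs : ℤ) + (x.2 - y.2).natAbs := by
  rw [lnorm, Prod.fst_sub, Prod.snd_sub, Int.abs_eq_natAbs, Int.abs_eq_natAbs]

/-- Telescoping bound. -/
lemma abs_tele (y : ℕ → ℤ) : ∀ u v : ℕ, u ≤ v →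
    (∀ l, u < l → l ≤ v → (y l - y (l-1)).natAbs ≤ 1) →
    (y v - y u).natAbs + u ≤ v := by
  intro u v huv
  induction v, huv using Nat.le_induction with
  | base => intro _; omega
  | succ n hn ih =>
    intro h
    have h1 := ih (fun l hl hl' => h l hl (by omega))
    have h2 := h (n+1) (by omega) le_rfl
    simp only [Nat.add_sub_cancel] at h2
    omega

lemma exists_adjacent_opposite (x : ℕ → ℤ) (r : ℕ)
    (hstep : ∀ l, 1 ≤ l → l ≤ r → (x l - x (l-1)).natAbs ≤ 1)
    (h1 : ∃ l, 1 ≤ l ∧ l ≤ r ∧ x l - x (l-1) = 1)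
    (h2 : ∃ l, 1 ≤ l ∧ l ≤ r ∧ x l - x (l-1) = -1) :
    ∃ a b, 1 ≤ a ∧ a < b ∧ b ≤ r ∧
      (x a - x (a-1)) * (x b - x (b-1)) = -1 ∧
      ∀ u, a < u → u < b → x u = x (u-1) := by
  classical
  obtain ⟨l1, hl1a, hl1b, hl1⟩ := h1
  obtain ⟨l2, hl2a, hl2b, hl2⟩ := h2
  set P : ℕ → Prop := fun d => ∃ a b, 1 ≤ a ∧ a < b ∧ b ≤ r ∧ b - a = d ∧
      (x a - x (a-1)) * (x b - x (b-1)) = -1 with hP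
  have hne : l1 ≠ l2 := by intro h; rw [h, hl2] at hl1; omega
  have hex : ∃ d, P d := by
    rcases lt_or_gt_of_ne hne with h | h
    · exact ⟨l2 - l1, l1, l2, hl1a, h, hl2b, rfl, by rw [hl1, hl2]; ring⟩
    · exact ⟨l1 - l2, l2, l1, hl2a, h, hl1b, rfl, by rw [hl1, hl2]; ring⟩
  obtain ⟨a, b, ha, hab, hbr, hd, hprod⟩ := Nat.find_spec hex
  refine ⟨a, b, ha, hab, hbr, hprod, ?_⟩
  intro u hau hub
  by_contra hne'
  have hu1 : (x u - x (u-1)).natAbs ≤ 1 := hstep u (by omega) (by omega)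
  have ha1 : (x a - x (a-1)).natAbs ≤ 1 := hstep a (by omega) (by omega)
  have hb1 : (x b - x (b-1)).natAbs ≤ 1 := hstep b (by omega) (by omega)
  have hxu : x u - x (u-1) = 1 ∨ x u - x (u-1) = -1 := by omega
  have hpa : x a - x (a-1) = 1 ∨ x a - x (a-1) = -1 := by
    by_contra hc
    push_neg at hc
    have : x a - x (a-1) = 0 := by omega
    rw [this] at hprod; simp at hprod
  have hvals : (x a - x (a-1) = 1 ∧ x b - x (b-1) = -1) ∨
      (x a - x (a-1) = -1 ∧ x b - x (b-1) = 1) := by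
    rcases hpa with h | h <;> rw [h] at hprod <;> [left; right] <;>
      refine ⟨h, by linarith⟩
  -- u's step is opposite to one of a, b; get a closer pair
  have hcontra : P (u - a) ∨ P (b - u) := by
    rcases hxu with hu | hu <;> rcases hvals with ⟨hva, hvb⟩ | ⟨hva, hvb⟩
    · right; exact ⟨u, b, by omega, by omega, hbr, rfl, by rw [hu, hvb]; ring⟩
    · left; exact ⟨a, u, ha, by omega, by omega, rfl, by rw [hu, hva]; ring⟩
    · left; exact ⟨a, u, ha, by omega, by omega, rfl, by rw [hu, hva]; ring⟩
    · right; exact ⟨u, b, by omega, by omega, hbr, rfl, by rw [hu, hvb]; ring⟩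
  rcases hcontra with h | h
  · exact Nat.find_min hex (by omega) h
  · exact Nat.find_min hex (by omega) h

lemma shorten_x (S B : Set (ℤ × ℤ)) (t : ℕ → ℤ × ℤ) (r : ℕ)
    (hmem : ∀ l, l ≤ r → t l ∈ S) (hbox : ∀ l, l ≤ r → t l ∈ B)
    (hstep : ∀ l, 1 ≤ l → l ≤ r → lnorm (t l - t (l-1)) = 1)
    (hfill : ∀ u v : ℤ × ℤ, u ∈ S → u ∈ B → v ∈ S → v ∈ B → u.1 = v.1 →
      ∀ y : ℤ, min u.2 v.2 < y → y < max u.2 v.2 → (u.1, y) ∈ S)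
    (hconv : ∀ u v : ℤ × ℤ, u ∈ B → v ∈ B → u.1 = v.1 →
      ∀ y : ℤ, min u.2 v.2 ≤ y → y ≤ max u.2 v.2 → (u.1, y) ∈ B)
    (h1 : ∃ l, 1 ≤ l ∧ l ≤ r ∧ (t l).1 - (t (l-1)).1 = 1)
    (h2 : ∃ l, 1 ≤ l ∧ l ≤ r ∧ (t l).1 - (t (l-1)).1 = -1) :
    ∃ (t' : ℕ → ℤ × ℤ) (r' : ℕ), r' < r ∧ t' 0 = t 0 ∧ t' r' = t r ∧
      (∀ l, l ≤ r' → t' l ∈ S) ∧ (∀ l, l ≤ r' → t' l ∈ B) ∧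
      ∀ l, 1 ≤ l → l ≤ r' → lnorm (t' l - t' (l-1)) = 1 := by
  have hs : ∀ l, 1 ≤ l → l ≤ r →
      ((t l).1 - (t (l-1)).1).natAbs + ((t l).2 - (t (l-1)).2).natAbs = 1 := by
    intro l h1 h2
    have := hstep l h1 h2
    rw [lnorm_natAbs] at this
    exact_mod_cast this
  obtain ⟨a, b, ha1, hab, hbr, hprod, hconst⟩ := exists_adjacent_opposite
    (fun n => (t n).1) r (fun l hl1 hl2 => by
      show ((t l).1 - (t (l-1)).1).natAbs ≤ 1
      have := hs l hl1 hl2; omega) h1 h2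
  set L := a - 1 with hL
  set M := b with hM
  -- the two end steps are x-steps of opposite sign
  have hsa : ((t a).1 - (t (a-1)).1).natAbs = 1 := by
    have h := hs a (by omega) (by omega)
    by_contra hc
    have : (t a).1 - (t (a-1)).1 = 0 := by omega
    rw [this] at hprod; simp at hprod
  have hsb : ((t b).1 - (t (b-1)).1).natAbs = 1 := by
    have h := hs b (by omega) (by omega)
    by_contra hc
    have : (t b).1 - (t (b-1)).1 = 0 := by omega
    rw [this] at hprod; simp at hprod
  have hya : (t a).2 = (t (a-1)).2 := by have := hs a (by omega) (by omega); omega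
  have hyb : (t b).2 = (t (b-1)).2 := by have := hs b (by omega) (by omega); omega
  -- x is constant on [a, b-1]
  have hxconst : ∀ u, a ≤ u → u ≤ b - 1 → (t u).1 = (t a).1 := by
    intro u hau
    induction u with
    | zero => intro _; omega
    | succ n ihn =>
      intro hub
      rcases Nat.lt_or_ge n a with h | h
      · have : a = n + 1 := by omega
        rw [this]
      · have he := hconst (n+1) (by omega) (by omega)
        simp only [Nat.add_sub_cancel] at he
        rw [he]; exact ihn h (by omega)
  have hvals : ((t a).1 - (t (a-1)).1 = 1 ∧ (t b).1 - (t (b-1)).1 = -1) ∨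
      ((t a).1 - (t (a-1)).1 = -1 ∧ (t b).1 - (t (b-1)).1 = 1) := by
    have hpa : (t a).1 - (t (a-1)).1 = 1 ∨ (t a).1 - (t (a-1)).1 = -1 := by omega
    rcases hpa with h | h <;> rw [h] at hprod <;> [left; right] <;>
      refine ⟨h, by linarith⟩
  have hx : (t M).1 = (t L).1 := by
    have hba : (t (b-1)).1 = (t a).1 := by
      rcases Nat.eq_or_lt_of_le (Nat.succ_le_of_lt hab) with h | h
      · rw [show b - 1 = a by omega]
      · exact hxconst (b-1) (by omega) le_rfl
    simp only [hM, hL]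
    omega
  -- bound on the y-difference
  have hytel : ((t (b-1)).2 - (t a).2).natAbs + a ≤ b - 1 := by
    refine abs_tele (fun n => (t n).2) a (b-1) (by omega) ?_
    intro l hl hl'
    show ((t l).2 - (t (l-1)).2).natAbs ≤ 1
    have := hs l (by omega) (by omega); omega
  set d := ((t M).2 - (t L).2).natAbs with hd
  have hdbound : L + d + 2 ≤ M := by
    have : ((t M).2 - (t L).2).natAbs = ((t (b-1)).2 - (t a).2).natAbs := by
      simp only [hM, hL]; rw [hyb, hya]
    omega
  have hMr : M ≤ r := hbr
  obtain ⟨e, he, hed⟩ : ∃ e : ℤ, (e = 1 ∨ e = -1) ∧ (t M).2 = (t L).2 + d * e := by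
    rcases le_total (t L).2 (t M).2 with h | h
    · exact ⟨1, Or.inl rfl, by omega⟩
    · exact ⟨-1, Or.inr rfl, by omega⟩
  set s : ℕ → ℤ × ℤ := fun n => ((t L).1, (t L).2 + n * e) with hsdef
  have hs0 : s 0 = t L := by simp [hsdef]
  have hsd : s d = t M := by
    have : ((t M).1, (t M).2) = t M := rfl
    rw [← this]
    simp only [hsdef, Prod.mk.injEq]
    exact ⟨hx.symm, by omega⟩
  have hLr : L ≤ r := by omega
  have hsS : ∀ n, n ≤ d → s n ∈ S := by
    intro n hn
    rcases Nat.eq_or_lt_of_le (Nat.zero_le n) with h | h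
    · rw [← h, hs0]; exact hmem L hLr
    rcases Nat.eq_or_lt_of_le hn with h | h
    · rw [h, hsd]; exact hmem M hMr
    refine hfill (t L) (t M) (hmem L hLr) (hbox L hLr) (hmem M hMr) (hbox M hMr)
      hx.symm ((t L).2 + n * e) ?_ ?_ <;> rcases he with rfl | rfl <;> omega
  have hsB : ∀ n, n ≤ d → s n ∈ B := by
    intro n hn
    refine hconv (t L) (t M) (hbox L hLr) (hbox M hMr) hx.symm ((t L).2 + n * e) ?_ ?_ <;>
      rcases he with rfl | rfl <;> omega
  set r' := L + d + (r - M) with hr'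
  set t' : ℕ → ℤ × ℤ := fun n =>
    if n ≤ L then t n else if n ≤ L + d then s (n - L) else t (M + (n - (L + d))) with ht'
  have hlow : ∀ n, n ≤ L → t' n = t n := by
    intro n h; simp only [ht', if_pos h]
  have hmid : ∀ n, L ≤ n → n ≤ L + d → t' n = s (n - L) := by
    intro n h h'
    by_cases hn : n ≤ L
    · have : n = L := le_antisymm hn h
      subst this
      simp only [ht', if_pos le_rfl, Nat.sub_self, hs0]
    · simp only [ht', if_neg hn, if_pos h']
  have hhigh : ∀ n, L + d ≤ n → t' n = t (M + (n - (L + d))) := by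
    intro n h
    by_cases hn : n ≤ L + d
    · have : n = L + d := le_antisymm hn h
      subst this
      rw [hmid _ (by omega) le_rfl, show L + d - L = d from by omega, hsd,
        Nat.sub_self, Nat.add_zero]
    · simp only [ht', if_neg (by omega : ¬ n ≤ L), if_neg hn]
  refine ⟨t', r', by omega, hlow 0 (Nat.zero_le _), ?_, ?_, ?_, ?_⟩
  · rw [hhigh r' (by omega)]
    congr 1
    omega
  · intro n hn
    rcases Nat.lt_or_ge n (L+1) with h | h
    · rw [hlow n (by omega)]; exact hmem n (by omega)
    rcases Nat.lt_or_ge n (L + d + 1) with h' | h'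
    · rw [hmid n (by omega) (by omega)]; exact hsS _ (by omega)
    · rw [hhigh n (by omega)]; exact hmem _ (by omega)
  · intro n hn
    rcases Nat.lt_or_ge n (L+1) with h | h
    · rw [hlow n (by omega)]; exact hbox n (by omega)
    rcases Nat.lt_or_ge n (L + d + 1) with h' | h'
    · rw [hmid n (by omega) (by omega)]; exact hsB _ (by omega)
    · rw [hhigh n (by omega)]; exact hbox _ (by omega)
  · intro n h1n h2n
    rcases Nat.lt_or_ge n (L+1) with h | h
    · rw [hlow n (by omega), hlow (n-1) (by omega)]
      exact hstep n h1n (by omega)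
    rcases Nat.lt_or_ge n (L + d + 1) with h' | h'
    · rw [hmid n (by omega) (by omega), hmid (n-1) (by omega) (by omega)]
      have hk : n - L = (n - 1 - L) + 1 := by omega
      rw [hk, lnorm_natAbs]
      simp only [hsdef]
      rcases he with rfl | rfl <;> omega
    · rw [hhigh n (by omega), hhigh (n-1) (by omega)]
      have hk : M + (n - (L + d)) - 1 = M + (n - 1 - (L + d)) := by omega
      rw [← hk]
      exact hstep (M + (n - (L + d))) (by omega) (by omega)

lemma chain_len_eq (t : ℕ → ℤ × ℤ) (r : ℕ)
    (hstep : ∀ l, 1 ≤ l → l ≤ r → lnorm (t l - t (l-1)) = 1)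
    (e₁ e₂ : ℤ) (he₁ : e₁ = 1 ∨ e₁ = -1) (he₂ : e₂ = 1 ∨ e₂ = -1)
    (h₁ : ∀ l, 1 ≤ l → l ≤ r → 0 ≤ e₁ * ((t l).1 - (t (l-1)).1))
    (h₂ : ∀ l, 1 ≤ l → l ≤ r → 0 ≤ e₂ * ((t l).2 - (t (l-1)).2)) :
    (r : ℤ) = lnorm (t r - t 0) := by
  have hs : ∀ l, 1 ≤ l → l ≤ r →
      ((t l).1 - (t (l-1)).1).natAbs + ((t l).2 - (t (l-1)).2).natAbs = 1 := by
    intro l hl1 hl2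
    have := hstep l hl1 hl2
    rw [lnorm_natAbs] at this
    exact_mod_cast this
  have key : ∀ n, n ≤ r → e₁ * ((t n).1 - (t 0).1) + e₂ * ((t n).2 - (t 0).2) = n
      ∧ 0 ≤ e₁ * ((t n).1 - (t 0).1) ∧ 0 ≤ e₂ * ((t n).2 - (t 0).2) := by
    intro n
    induction n with
    | zero => intro _; simp
    | succ m ih =>
      intro h
      obtain ⟨k1, k2, k3⟩ := ih (by omega)
      have hst := hs (m+1) (by omega) h
      have ha := h₁ (m+1) (by omega) h
      have hb := h₂ (m+1) (by omega) h
      simp only [Nat.add_sub_cancel] at hst ha hb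
      rcases he₁ with rfl | rfl <;> rcases he₂ with rfl | rfl <;>
        push_cast <;> omega
  obtain ⟨k1, k2, k3⟩ := key r le_rfl
  rw [lnorm_natAbs]
  rcases he₁ with rfl | rfl <;> rcases he₂ with rfl | rfl <;> omega

lemma lnorm_swap_sub (x y : ℤ × ℤ) :
    lnorm (x.swap - y.swap) = lnorm (x - y) := by
  simp [lnorm, Prod.swap, add_comm]

/-- If `|i_k - j_k| ≤ p_k + 1` for `k = 1, 2`, `S` is axis-filling on
the interaction box intersection `B(i,j)`, and there is a chain in `S` between
`i` and `j` lying in `B(i,j)`, then there exists a shortest chain in `S`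
between `i` and `j`. -/
theorem exists_shortest_of_chain_in_box (S : Set (ℤ × ℤ)) (p₁ p₂ : ℕ) (i j : ℤ × ℤ)
    (hi : i ∈ S) (hj : j ∈ S)
    (h1 : |i.1 - j.1| ≤ (p₁ : ℤ) + 1) (h2 : |i.2 - j.2| ≤ (p₂ : ℤ) + 1)
    (haf : AxisFilling S (interBox p₁ p₂ i j))
    (hch : ∃ (t : ℕ → ℤ × ℤ) (r : ℕ), ChainIn S t r i j ∧
      ∀ l, l ≤ r → t l ∈ interBox p₁ p₂ i j) :
    ∃ (t : ℕ → ℤ × ℤ) (r : ℕ), ShortestChainIn S t r i j := by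
  classical
  set B := interBox p₁ p₂ i j with hB
  -- fill lemmas in both coordinates
  have hfill1 : ∀ u v : ℤ × ℤ, u ∈ S → u ∈ B → v ∈ S → v ∈ B → u.1 = v.1 →
      ∀ y : ℤ, min u.2 v.2 < y → y < max u.2 v.2 → (u.1, y) ∈ S := by
    intro u v hu hbu hv hbv hxy y hy1 hy2
    refine haf u v hu hbu hv hbv 0 (by simpa [coord2] using hxy) (u.1, y)
      (by simp [coord2]) ?_
    intro k' hk'
    fin_cases k'
    · simp at hk'
    · simp only [coord2, Matrix.cons_val_one, Matrix.head_cons]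
      exact ⟨hy1, hy2⟩
  have hfill2 : ∀ u v : ℤ × ℤ, u ∈ S → u ∈ B → v ∈ S → v ∈ B → u.2 = v.2 →
      ∀ y : ℤ, min u.1 v.1 < y → y < max u.1 v.1 → (y, u.2) ∈ S := by
    intro u v hu hbu hv hbv hxy y hy1 hy2
    refine haf u v hu hbu hv hbv 1 (by simpa [coord2] using hxy) (y, u.2)
      (by simp [coord2]) ?_
    intro k' hk'
    fin_cases k'
    · simp only [coord2, Matrix.cons_val_one, Matrix.head_cons]
      exact ⟨hy1, hy2⟩
    · simp at hk'
  have hconv1 : ∀ u v : ℤ × ℤ, u ∈ B → v ∈ B → u.1 = v.1 →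
      ∀ y : ℤ, min u.2 v.2 ≤ y → y ≤ max u.2 v.2 → (u.1, y) ∈ B := by
    intro u v hu hv hxy y hy1 hy2
    simp only [hB, interBox, Set.mem_setOf_eq, Int.abs_eq_natAbs] at hu hv ⊢
    omega
  have hconv2 : ∀ u v : ℤ × ℤ, u ∈ B → v ∈ B → u.2 = v.2 →
      ∀ y : ℤ, min u.1 v.1 ≤ y → y ≤ max u.1 v.1 → (y, u.2) ∈ B := by
    intro u v hu hv hxy y hy1 hy2
    simp only [hB, interBox, Set.mem_setOf_eq, Int.abs_eq_natAbs] at hu hv ⊢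
    omega
  obtain ⟨t0, r0, hch0, hbox0⟩ := hch
  have key : ∀ (r : ℕ) (t : ℕ → ℤ × ℤ), ChainIn S t r i j → (∀ l, l ≤ r → t l ∈ B) →
      ∃ (t' : ℕ → ℤ × ℤ) (r' : ℕ), ShortestChainIn S t' r' i j := by
    intro r
    induction r using Nat.strong_induction_on with
    | _ r ih =>
      intro t hchain hbox
      obtain ⟨ht0, htr, htS, htstep⟩ := hchain
      by_cases hr : (r : ℤ) = lnorm (j - i)
      · exact ⟨t, r, ⟨ht0, htr, htS, htstep⟩, hr⟩
      have hs : ∀ l, 1 ≤ l → l ≤ r →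
          ((t l).1 - (t (l-1)).1).natAbs + ((t l).2 - (t (l-1)).2).natAbs = 1 := by
        intro l hl1 hl2
        have := htstep l hl1 hl2
        rw [lnorm_natAbs] at this
        exact_mod_cast this
      by_cases hx : (∃ l, 1 ≤ l ∧ l ≤ r ∧ (t l).1 - (t (l-1)).1 = 1) ∧
          (∃ l, 1 ≤ l ∧ l ≤ r ∧ (t l).1 - (t (l-1)).1 = -1)
      · obtain ⟨t', r', hlt, h0, hr', hS', hB', hstep'⟩ :=
          shorten_x S B t r htS hbox htstep hfill1 hconv1 hx.1 hx.2
        exact ih r' hlt t' ⟨by rw [h0, ht0], by rw [hr', htr], hS', hstep'⟩ hB'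
      by_cases hy : (∃ l, 1 ≤ l ∧ l ≤ r ∧ (t l).2 - (t (l-1)).2 = 1) ∧
          (∃ l, 1 ≤ l ∧ l ≤ r ∧ (t l).2 - (t (l-1)).2 = -1)
      · -- swap coordinates and apply shorten_x
        set S' : Set (ℤ × ℤ) := Prod.swap ⁻¹' S with hS'def
        set B' : Set (ℤ × ℤ) := Prod.swap ⁻¹' B with hB'def
        set u : ℕ → ℤ × ℤ := fun n => (t n).swap with hu
        have humem : ∀ l, l ≤ r → u l ∈ S' := by
          intro l hl
          simp only [hu, hS'def, Set.mem_preimage, Prod.swap_swap]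
          exact htS l hl
        have hubox : ∀ l, l ≤ r → u l ∈ B' := by
          intro l hl
          simp only [hu, hB'def, Set.mem_preimage, Prod.swap_swap]
          exact hbox l hl
        have hustep : ∀ l, 1 ≤ l → l ≤ r → lnorm (u l - u (l-1)) = 1 := by
          intro l hl1 hl2
          have : u l - u (l-1) = ((t l).2 - (t (l-1)).2, (t l).1 - (t (l-1)).1) := by
            simp [hu, Prod.ext_iff]
          rw [this]
          have h5 := hs l hl1 hl2
          show |(t l).2 - (t (l-1)).2| + |(t l).1 - (t (l-1)).1| = 1
          rw [Int.abs_eq_natAbs, Int.abs_eq_natAbs]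
          omega
        have hufill : ∀ a b : ℤ × ℤ, a ∈ S' → a ∈ B' → b ∈ S' → b ∈ B' → a.1 = b.1 →
            ∀ y : ℤ, min a.2 b.2 < y → y < max a.2 b.2 → (a.1, y) ∈ S' := by
          intro a b haS haB hbS hbB hab y hy1 hy2
          simp only [hS'def, hB'def, Set.mem_preimage] at *
          exact hfill2 a.swap b.swap haS haB hbS hbB hab y hy1 hy2
        have huconv : ∀ a b : ℤ × ℤ, a ∈ B' → b ∈ B' → a.1 = b.1 →
            ∀ y : ℤ, min a.2 b.2 ≤ y → y ≤ max a.2 b.2 → (a.1, y) ∈ B' := by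
          intro a b haB hbB hab y hy1 hy2
          simp only [hB'def, Set.mem_preimage] at *
          exact hconv2 a.swap b.swap haB hbB hab y hy1 hy2
        have hy1' : ∃ l, 1 ≤ l ∧ l ≤ r ∧ (u l).1 - (u (l-1)).1 = 1 := by
          obtain ⟨l, hl1, hl2, hl3⟩ := hy.1
          exact ⟨l, hl1, hl2, by simpa [hu] using hl3⟩
        have hy2' : ∃ l, 1 ≤ l ∧ l ≤ r ∧ (u l).1 - (u (l-1)).1 = -1 := by
          obtain ⟨l, hl1, hl2, hl3⟩ := hy.2
          exact ⟨l, hl1, hl2, by simpa [hu] using hl3⟩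
        obtain ⟨t', r', hlt, h0, hr', hS'', hB'', hstep'⟩ :=
          shorten_x S' B' u r humem hubox hustep hufill huconv hy1' hy2'
        refine ih r' hlt (fun n => (t' n).swap) ⟨?_, ?_, ?_, ?_⟩ ?_
        · show (t' 0).swap = i
          rw [h0, hu]; simpa using ht0
        · show (t' r').swap = j
          rw [hr', hu]; simpa using htr
        · intro l hl; exact hS'' l hl
        · intro l hl1 hl2
          show lnorm ((t' l).swap - (t' (l-1)).swap) = 1
          rw [lnorm_swap_sub]
          exact hstep' l hl1 hl2
        · intro l hl; exact hB'' l hl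
      · -- both coordinates monotone: r = lnorm (j - i), contradiction
        exfalso
        have sign_of : ∀ f : ℕ → ℤ, (∀ l, 1 ≤ l → l ≤ r → (f l - f (l-1)).natAbs ≤ 1) →
            ¬((∃ l, 1 ≤ l ∧ l ≤ r ∧ f l - f (l-1) = 1) ∧
              (∃ l, 1 ≤ l ∧ l ≤ r ∧ f l - f (l-1) = -1)) →
            ∃ e : ℤ, (e = 1 ∨ e = -1) ∧ ∀ l, 1 ≤ l → l ≤ r → 0 ≤ e * (f l - f (l-1)) := by
          intro f hb h
          rw [not_and_or] at h
          rcases h with h | h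
          · push_neg at h
            refine ⟨-1, Or.inr rfl, fun l hl1 hl2 => ?_⟩
            have h3 := hb l hl1 hl2
            have h4 := h l hl1 hl2
            omega
          · push_neg at h
            refine ⟨1, Or.inl rfl, fun l hl1 hl2 => ?_⟩
            have h3 := hb l hl1 hl2
            have h4 := h l hl1 hl2
            omega
        obtain ⟨e₁, he₁, hm₁⟩ := sign_of (fun n => (t n).1)
          (fun l hl1 hl2 => by
            show ((t l).1 - (t (l-1)).1).natAbs ≤ 1
            have := hs l hl1 hl2; omega)
          (by simpa using hx)
        obtain ⟨e₂, he₂, hm₂⟩ := sign_of (fun n => (t n).2)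
          (fun l hl1 hl2 => by
            show ((t l).2 - (t (l-1)).2).natAbs ≤ 1
            have := hs l hl1 hl2; omega)
          (by simpa using hy)
        have := chain_len_eq t r htstep e₁ e₂ he₁ he₂
          (fun l hl1 hl2 => hm₁ l hl1 hl2) (fun l hl1 hl2 => hm₂ l hl1 hl2)
        rw [ht0, htr] at this
        exact hr this
  exact key r0 t0 hch0 hbox0
end

section
/- Let S ⊆ ℤ × ℤ and p_1, p_2 ∈ ℕ. Let C_{i,j} be an L-chain in S between i and j (with some corner element), let t be an element of C_{i,j}, and let C_{l,t} be an L-chain in S between l and t (with some corner element). Let p be an element of C_{i,j} and p' an element of C_{l,t} such that |p_k − p'_k| ≤ p_k + 1, |p_k − t_k| ≤ p_k + 1, and |p'_k − t_k| ≤ p_k + 1 for k = 1,2, and suppose S is axis-filling on the interaction box intersection B(p,p'). Then there exists a shortest chain in S between p and p'. -/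
section Helpers

variable {S : Set (ℤ × ℤ)}

@[simp] lemma coord2_zero (p : ℤ × ℤ) : coord2 p 0 = p.1 := rfl
@[simp] lemma coord2_one (p : ℤ × ℤ) : coord2 p 1 = p.2 := rfl

lemma shortest_seg_h (S : Set (ℤ × ℤ)) (a b : ℤ × ℤ) (hab : a.2 = b.2)
    (hS : ∀ z, min a.1 b.1 ≤ z → z ≤ max a.1 b.1 → (z, a.2) ∈ S) :
    ∃ ch r, ShortestChainIn S ch r a b := by
  obtain ⟨e, he, hee⟩ : ∃ e : ℤ, (e = 1 ∨ e = -1) ∧ b.1 - a.1 = e * ((b.1 - a.1).natAbs : ℤ) := by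
    by_cases h : a.1 ≤ b.1
    · exact ⟨1, Or.inl rfl, by rw [one_mul]; omega⟩
    · exact ⟨-1, Or.inr rfl, by rw [neg_one_mul]; omega⟩
  refine ⟨fun n => (a.1 + e * n, a.2), (b.1 - a.1).natAbs, ⟨?_, ?_, ?_, ?_⟩, ?_⟩
  · simp
  · have h1 : a.1 + e * ((b.1 - a.1).natAbs : ℤ) = b.1 := by linarith [hee]
    exact Prod.ext h1 hab
  · intro l hl
    refine hS _ ?_ ?_ <;> rcases he with rfl | rfl <;>
      simp only [one_mul, neg_one_mul] at hee ⊢ <;> omega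
  · intro l h1 h2
    have hc : ((l - 1 : ℕ) : ℤ) = (l : ℤ) - 1 := by omega
    simp only [lnorm, Prod.mk_sub_mk, Prod.fst, Prod.snd, hc]
    rcases he with rfl | rfl <;> simp only [one_mul, neg_one_mul] <;>
      rw [Int.abs_eq_natAbs, Int.abs_eq_natAbs] <;> omega
  · simp only [lnorm]
    rw [Int.abs_eq_natAbs, Int.abs_eq_natAbs]
    have : b.2 - a.2 = 0 := by omega
    rw [Prod.fst_sub, Prod.snd_sub, this]
    simp

lemma shortest_seg_v (S : Set (ℤ × ℤ)) (a b : ℤ × ℤ) (hab : a.1 = b.1)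
    (hS : ∀ z, min a.2 b.2 ≤ z → z ≤ max a.2 b.2 → (a.1, z) ∈ S) :
    ∃ ch r, ShortestChainIn S ch r a b := by
  obtain ⟨e, he, hee⟩ : ∃ e : ℤ, (e = 1 ∨ e = -1) ∧ b.2 - a.2 = e * ((b.2 - a.2).natAbs : ℤ) := by
    by_cases h : a.2 ≤ b.2
    · exact ⟨1, Or.inl rfl, by rw [one_mul]; omega⟩
    · exact ⟨-1, Or.inr rfl, by rw [neg_one_mul]; omega⟩
  refine ⟨fun n => (a.1, a.2 + e * n), (b.2 - a.2).natAbs, ⟨?_, ?_, ?_, ?_⟩, ?_⟩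
  · simp
  · have h1 : a.2 + e * ((b.2 - a.2).natAbs : ℤ) = b.2 := by linarith [hee]
    exact Prod.ext hab h1
  · intro l hl
    refine hS _ ?_ ?_ <;> rcases he with rfl | rfl <;>
      simp only [one_mul, neg_one_mul] at hee ⊢ <;> omega
  · intro l h1 h2
    have hc : ((l - 1 : ℕ) : ℤ) = (l : ℤ) - 1 := by omega
    simp only [lnorm, Prod.mk_sub_mk, Prod.fst, Prod.snd, hc]
    rcases he with rfl | rfl <;> simp only [one_mul, neg_one_mul] <;>
      rw [Int.abs_eq_natAbs, Int.abs_eq_natAbs] <;> omega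
  · simp only [lnorm]
    rw [Int.abs_eq_natAbs, Int.abs_eq_natAbs]
    have : b.1 - a.1 = 0 := by omega
    rw [Prod.fst_sub, Prod.snd_sub, this]
    simp

end Helpers
lemma lnorm_sub_comm (a b : ℤ × ℤ) : lnorm (a - b) = lnorm (b - a) := by
  simp [lnorm, Prod.fst_sub, Prod.snd_sub, abs_sub_comm]

lemma shortest_concat (S : Set (ℤ × ℤ)) {ch1 ch2 : ℕ → ℤ × ℤ} {r1 r2 : ℕ} {a b c : ℤ × ℤ}
    (h1 : ShortestChainIn S ch1 r1 a b) (h2 : ShortestChainIn S ch2 r2 b c)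
    (hlen : lnorm (c - a) = lnorm (b - a) + lnorm (c - b)) :
    ∃ ch r, ShortestChainIn S ch r a c := by
  obtain ⟨⟨h10, h1r, h1m, h1s⟩, h1l⟩ := h1
  obtain ⟨⟨h20, h2r, h2m, h2s⟩, h2l⟩ := h2
  refine ⟨fun n => if n ≤ r1 then ch1 n else ch2 (n - r1), r1 + r2, ⟨?_, ?_, ?_, ?_⟩, ?_⟩
  · simp [h10]
  · by_cases h : r1 + r2 ≤ r1
    · have h0 : r2 = 0 := by omega
      subst h0
      simp only [if_pos h]
      rw [show r1 + 0 = r1 from rfl, h1r, ← h20, h2r]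
    · simp only [if_neg h]
      rw [show r1 + r2 - r1 = r2 by omega, h2r]
  · intro l hl
    by_cases h : l ≤ r1
    · simpa [h] using h1m l h
    · simp only [if_neg h]
      exact h2m _ (by omega)
  · intro l hl1 hl2
    by_cases h : l ≤ r1
    · have h' : l - 1 ≤ r1 := by omega
      simp only [if_pos h, if_pos h']
      exact h1s l hl1 h
    · by_cases h' : l - 1 ≤ r1
      · have e1 : l - r1 = 1 := by omega
        have e2 : l - 1 = r1 := by omega
        simp only [if_neg h, if_pos h', e1, e2, h1r, ← h20]
        have := h2s 1 le_rfl (by omega)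
        simpa using this
      · simp only [if_neg h, if_neg h']
        rw [show l - 1 - r1 = l - r1 - 1 by omega]
        exact h2s (l - r1) (by omega) (by omega)
  · push_cast
    rw [hlen, ← h1l, ← h2l]

lemma shortest_rev (S : Set (ℤ × ℤ)) {ch : ℕ → ℤ × ℤ} {r : ℕ} {a b : ℤ × ℤ}
    (h : ShortestChainIn S ch r a b) :
    ∃ ch' r', ShortestChainIn S ch' r' b a := by
  obtain ⟨⟨h0, hr, hm, hs⟩, hl⟩ := h
  refine ⟨fun n => ch (r - n), r, ⟨?_, ?_, ?_, ?_⟩, ?_⟩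
  · simpa using hr
  · simpa using h0
  · intro l hl'
    exact hm _ (by omega)
  · intro l h1 h2
    have e1 : r - (l - 1) = (r - l) + 1 := by omega
    simp only [e1]
    rw [lnorm_sub_comm]
    have := hs (r - l + 1) (by omega) (by omega)
    simpa using this
  · rw [hl, lnorm_sub_comm]

lemma shortest_swap {S : Set (ℤ × ℤ)} {ch : ℕ → ℤ × ℤ} {r : ℕ} {a b : ℤ × ℤ}
    (h : ShortestChainIn {p : ℤ × ℤ | (p.2, p.1) ∈ S} ch r a b) :
    ∃ ch' r', ShortestChainIn S ch' r' (a.2, a.1) (b.2, b.1) := by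
  obtain ⟨⟨h0, hr, hm, hs⟩, hl⟩ := h
  have key : ∀ x y : ℤ × ℤ, lnorm ((x.2, x.1) - (y.2, y.1)) = lnorm (x - y) := by
    intro x y
    simp [lnorm, Prod.mk_sub_mk, Prod.fst_sub, Prod.snd_sub, add_comm]
  refine ⟨fun n => ((ch n).2, (ch n).1), r, ⟨?_, ?_, ?_, ?_⟩, ?_⟩
  · simp only [h0]
  · simp only [hr]
  · intro l hl'
    exact hm l hl'
  · intro l h1 h2
    simp only [key]
    exact hs l h1 h2
  · simp only [key]
    exact hl
def Hrow (S : Set (ℤ × ℤ)) (w z₁ z₂ : ℤ) : Prop :=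
  ∀ z, min z₁ z₂ ≤ z → z ≤ max z₁ z₂ → (z, w) ∈ S

def Vcol (S : Set (ℤ × ℤ)) (c z₁ z₂ : ℤ) : Prop :=
  ∀ z, min z₁ z₂ ≤ z → z ≤ max z₁ z₂ → (c, z) ∈ S

def LP (S : Set (ℤ × ℤ)) (x y u v : ℤ) : Prop :=
  (Hrow S y x u ∧ Vcol S u y v) ∨ (Vcol S x y v ∧ Hrow S v x u)

lemma LP_left_mem {S : Set (ℤ × ℤ)} {x y u v : ℤ} (h : LP S x y u v) : (x, y) ∈ S := by
  rcases h with ⟨hr, _⟩ | ⟨hv, _⟩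
  · exact hr x (by omega) (by omega)
  · exact hv y (by omega) (by omega)

lemma LP_shortest {S : Set (ℤ × ℤ)} {x y u v : ℤ} (h : LP S x y u v) :
    ∃ ch r, ShortestChainIn S ch r (x, y) (u, v) := by
  rcases h with ⟨hr, hv⟩ | ⟨hv, hr⟩
  · obtain ⟨c1, r1, hc1⟩ := shortest_seg_h S (x, y) (u, y) rfl (fun z h1 h2 => hr z h1 h2)
    obtain ⟨c2, r2, hc2⟩ := shortest_seg_v S (u, y) (u, v) rfl (fun z h1 h2 => hv z h1 h2)
    refine shortest_concat S hc1 hc2 ?_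
    simp only [lnorm, Prod.mk_sub_mk, Prod.fst_sub, Prod.snd_sub, Int.abs_eq_natAbs]
    omega
  · obtain ⟨c1, r1, hc1⟩ := shortest_seg_v S (x, y) (x, v) rfl (fun z h1 h2 => hv z h1 h2)
    obtain ⟨c2, r2, hc2⟩ := shortest_seg_h S (x, v) (u, v) rfl (fun z h1 h2 => hr z h1 h2)
    refine shortest_concat S hc1 hc2 ?_
    simp only [lnorm, Prod.mk_sub_mk, Prod.fst_sub, Prod.snd_sub, Int.abs_eq_natAbs]
    omega
lemma segS0 {S : Set (ℤ × ℤ)} {a b : ℤ × ℤ} (ha : a ∈ S) (hb : b ∈ S) (hab : a.2 = b.2)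
    (hd : DirChainExists S 0 a b) :
    ∀ z, min a.1 b.1 ≤ z → z ≤ max a.1 b.1 → (z, a.2) ∈ S := by
  intro z h1 h2
  rcases eq_or_ne z a.1 with rfl | hne1
  · simpa using ha
  rcases eq_or_ne z b.1 with rfl | hne2
  · rw [hab]; simpa using hb
  refine hd (z, a.2) ?_ ?_ ?_
  · intro k' hk'
    fin_cases k'
    · simp at hk'
    · simp
  · simp only [coord2_zero]; omega
  · simp only [coord2_zero]; omega

lemma segS1 {S : Set (ℤ × ℤ)} {a b : ℤ × ℤ} (ha : a ∈ S) (hb : b ∈ S) (hab : a.1 = b.1)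
    (hd : DirChainExists S 1 a b) :
    ∀ z, min a.2 b.2 ≤ z → z ≤ max a.2 b.2 → (a.1, z) ∈ S := by
  intro z h1 h2
  rcases eq_or_ne z a.2 with rfl | hne1
  · simpa using ha
  rcases eq_or_ne z b.2 with rfl | hne2
  · rw [hab]; simpa using hb
  refine hd (a.1, z) ?_ ?_ ?_
  · intro k' hk'
    fin_cases k'
    · simp
    · simp at hk'
  · simp only [coord2_one]; omega
  · simp only [coord2_one]; omega

lemma lchain_connect {S : Set (ℤ × ℤ)} {i c j q t : ℤ × ℤ} {k₁ k₂ : Fin 2}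
    (h1 : IsLChain S i c j k₁ k₂) (hq : InLChain i c j k₁ k₂ q)
    (ht : InLChain i c j k₁ k₂ t) :
    LP S q.1 q.2 t.1 t.2 := by
  obtain ⟨hne, hiS, hcS, hjS, hic, hd1, hcj, hd2⟩ := h1
  have hk : (k₁ = 0 ∧ k₂ = 1) ∨ (k₁ = 1 ∧ k₂ = 0) := by
    fin_cases k₁ <;> fin_cases k₂ <;> simp_all
  rcases hk with ⟨rfl, rfl⟩ | ⟨rfl, rfl⟩
  · -- first leg horizontal at row i.2 = c.2, second leg vertical at column c.1 = j.1
    have hic2 : i.2 = c.2 := by simpa using hic 1 (by decide)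
    have hcj1 : c.1 = j.1 := by simpa using hcj 0 (by decide)
    have hseg1 : ∀ z, min i.1 c.1 ≤ z → z ≤ max i.1 c.1 → (z, i.2) ∈ S :=
      segS0 hiS hcS hic2 hd1
    have hseg2 : ∀ z, min c.2 j.2 ≤ z → z ≤ max c.2 j.2 → (c.1, z) ∈ S :=
      segS1 hcS hjS hcj1 hd2
    rcases hq with ⟨hqa, hqb, hqc⟩ | ⟨hqa, hqb, hqc⟩ <;>
      rcases ht with ⟨hta, htb, htc⟩ | ⟨hta, htb, htc⟩
    all_goals
      simp only [coord2_zero, coord2_one] at hqb hqc htb htc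
    · -- q, t on leg 1
      have hq2 : q.2 = i.2 := by simpa using hqa 1 (by decide)
      have ht2 : t.2 = i.2 := by simpa using hta 1 (by decide)
      left
      constructor
      · intro z hz1 hz2
        rw [hq2]
        exact hseg1 z (by omega) (by omega)
      · intro z hz1 hz2
        have hz : z = q.2 := by omega
        rw [hz, hq2]
        exact hseg1 t.1 (by omega) (by omega)
    · -- q leg 1, t leg 2
      have hq2 : q.2 = i.2 := by simpa using hqa 1 (by decide)
      have ht1 : t.1 = c.1 := by simpa using hta 0 (by decide)
      left
      constructor
      · intro z hz1 hz2
        rw [hq2]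
        exact hseg1 z (by omega) (by omega)
      · intro z hz1 hz2
        rw [ht1]
        exact hseg2 z (by omega) (by omega)
    · -- q leg 2, t leg 1
      have hq1 : q.1 = c.1 := by simpa using hqa 0 (by decide)
      have ht2 : t.2 = i.2 := by simpa using hta 1 (by decide)
      right
      constructor
      · intro z hz1 hz2
        rw [hq1]
        exact hseg2 z (by omega) (by omega)
      · intro z hz1 hz2
        rw [show t.2 = i.2 from ht2]
        exact hseg1 z (by omega) (by omega)
    · -- q, t on leg 2
      have hq1 : q.1 = c.1 := by simpa using hqa 0 (by decide)
      have ht1 : t.1 = c.1 := by simpa using hta 0 (by decide)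
      right
      constructor
      · intro z hz1 hz2
        rw [hq1]
        exact hseg2 z (by omega) (by omega)
      · intro z hz1 hz2
        have hz : z = q.1 := by omega
        rw [hz, hq1]
        exact hseg2 t.2 (by omega) (by omega)
  · -- first leg vertical at column i.1 = c.1, second leg horizontal at row c.2 = j.2
    have hic1 : i.1 = c.1 := by simpa using hic 0 (by decide)
    have hcj2 : c.2 = j.2 := by simpa using hcj 1 (by decide)
    have hseg1 : ∀ z, min i.2 c.2 ≤ z → z ≤ max i.2 c.2 → (i.1, z) ∈ S :=
      segS1 hiS hcS hic1 hd1
    have hseg2 : ∀ z, min c.1 j.1 ≤ z → z ≤ max c.1 j.1 → (z, c.2) ∈ S :=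
      segS0 hcS hjS hcj2 hd2
    rcases hq with ⟨hqa, hqb, hqc⟩ | ⟨hqa, hqb, hqc⟩ <;>
      rcases ht with ⟨hta, htb, htc⟩ | ⟨hta, htb, htc⟩
    all_goals
      simp only [coord2_zero, coord2_one] at hqb hqc htb htc
    · -- q, t on leg 1
      have hq1 : q.1 = i.1 := by simpa using hqa 0 (by decide)
      have ht1 : t.1 = i.1 := by simpa using hta 0 (by decide)
      right
      constructor
      · intro z hz1 hz2
        rw [hq1]
        exact hseg1 z (by omega) (by omega)
      · intro z hz1 hz2
        have hz : z = q.1 := by omega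
        rw [hz, hq1]
        exact hseg1 t.2 (by omega) (by omega)
    · -- q leg 1, t leg 2
      have hq1 : q.1 = i.1 := by simpa using hqa 0 (by decide)
      have ht2 : t.2 = c.2 := by simpa using hta 1 (by decide)
      right
      constructor
      · intro z hz1 hz2
        rw [hq1]
        exact hseg1 z (by omega) (by omega)
      · intro z hz1 hz2
        rw [ht2]
        exact hseg2 z (by omega) (by omega)
    · -- q leg 2, t leg 1
      have hq2 : q.2 = c.2 := by simpa using hqa 1 (by decide)
      have ht1 : t.1 = i.1 := by simpa using hta 0 (by decide)
      left
      constructor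
      · intro z hz1 hz2
        rw [hq2]
        exact hseg2 z (by omega) (by omega)
      · intro z hz1 hz2
        rw [ht1]
        exact hseg1 z (by omega) (by omega)
    · -- q, t on leg 2
      have hq2 : q.2 = c.2 := by simpa using hqa 1 (by decide)
      have ht2 : t.2 = c.2 := by simpa using hta 1 (by decide)
      left
      constructor
      · intro z hz1 hz2
        rw [hq2]
        exact hseg2 z (by omega) (by omega)
      · intro z hz1 hz2
        have hz : z = q.2 := by omega
        rw [hz, hq2]
        exact hseg2 t.1 (by omega) (by omega)
lemma fill_col (S : Set (ℤ × ℤ)) (p₁ p₂ : ℕ) (q q' t : ℤ × ℤ)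
    (h1 : |q.1 - q'.1| ≤ (p₁ : ℤ) + 1) (h2 : |q.2 - q'.2| ≤ (p₂ : ℤ) + 1)
    (h3 : |q.1 - t.1| ≤ (p₁ : ℤ) + 1) (h4 : |q.2 - t.2| ≤ (p₂ : ℤ) + 1)
    (h5 : |q'.1 - t.1| ≤ (p₁ : ℤ) + 1) (h6 : |q'.2 - t.2| ≤ (p₂ : ℤ) + 1)
    (haf : AxisFilling S (interBox p₁ p₂ q q')) :
    ∀ c z₁ z₂, min q.1 (min q'.1 t.1) ≤ c → c ≤ max q.1 (max q'.1 t.1) →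
      min q.2 (min q'.2 t.2) ≤ z₁ → z₁ ≤ max q.2 (max q'.2 t.2) →
      min q.2 (min q'.2 t.2) ≤ z₂ → z₂ ≤ max q.2 (max q'.2 t.2) →
      (c, z₁) ∈ S → (c, z₂) ∈ S →
      ∀ z, min z₁ z₂ ≤ z → z ≤ max z₁ z₂ → (c, z) ∈ S := by
  rw [abs_le] at h1 h2 h3 h4 h5 h6
  have hbox : ∀ w₁ w₂ : ℤ, min q.1 (min q'.1 t.1) ≤ w₁ → w₁ ≤ max q.1 (max q'.1 t.1) →
      min q.2 (min q'.2 t.2) ≤ w₂ → w₂ ≤ max q.2 (max q'.2 t.2) →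
      (w₁, w₂) ∈ interBox p₁ p₂ q q' := by
    intro w₁ w₂ a1 a2 a3 a4
    refine ⟨?_, ?_, ?_, ?_⟩ <;> rw [abs_le] <;> constructor <;> omega
  intro c z₁ z₂ a1 a2 a3 a4 a5 a6 hs1 hs2 z hz1 hz2
  rcases eq_or_ne z z₁ with rfl | hne1
  · exact hs1
  rcases eq_or_ne z z₂ with rfl | hne2
  · exact hs2
  refine haf (c, z₁) (c, z₂) hs1 (hbox c z₁ a1 a2 a3 a4) hs2 (hbox c z₂ a1 a2 a5 a6)
    0 rfl (c, z) rfl ?_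
  intro k' hk'
  fin_cases k'
  · simp at hk'
  · show min z₁ z₂ < z ∧ z < max z₁ z₂
    omega

lemma fill_row (S : Set (ℤ × ℤ)) (p₁ p₂ : ℕ) (q q' t : ℤ × ℤ)
    (h1 : |q.1 - q'.1| ≤ (p₁ : ℤ) + 1) (h2 : |q.2 - q'.2| ≤ (p₂ : ℤ) + 1)
    (h3 : |q.1 - t.1| ≤ (p₁ : ℤ) + 1) (h4 : |q.2 - t.2| ≤ (p₂ : ℤ) + 1)
    (h5 : |q'.1 - t.1| ≤ (p₁ : ℤ) + 1) (h6 : |q'.2 - t.2| ≤ (p₂ : ℤ) + 1)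
    (haf : AxisFilling S (interBox p₁ p₂ q q')) :
    ∀ w z₁ z₂, min q.2 (min q'.2 t.2) ≤ w → w ≤ max q.2 (max q'.2 t.2) →
      min q.1 (min q'.1 t.1) ≤ z₁ → z₁ ≤ max q.1 (max q'.1 t.1) →
      min q.1 (min q'.1 t.1) ≤ z₂ → z₂ ≤ max q.1 (max q'.1 t.1) →
      (z₁, w) ∈ S → (z₂, w) ∈ S →
      ∀ z, min z₁ z₂ ≤ z → z ≤ max z₁ z₂ → (z, w) ∈ S := by
  rw [abs_le] at h1 h2 h3 h4 h5 h6
  have hbox : ∀ w₁ w₂ : ℤ, min q.1 (min q'.1 t.1) ≤ w₁ → w₁ ≤ max q.1 (max q'.1 t.1) →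
      min q.2 (min q'.2 t.2) ≤ w₂ → w₂ ≤ max q.2 (max q'.2 t.2) →
      (w₁, w₂) ∈ interBox p₁ p₂ q q' := by
    intro w₁ w₂ a1 a2 a3 a4
    refine ⟨?_, ?_, ?_, ?_⟩ <;> rw [abs_le] <;> constructor <;> omega
  intro w z₁ z₂ a1 a2 a3 a4 a5 a6 hs1 hs2 z hz1 hz2
  rcases eq_or_ne z z₁ with rfl | hne1
  · exact hs1
  rcases eq_or_ne z z₂ with rfl | hne2
  · exact hs2
  refine haf (z₁, w) (z₂, w) hs1 (hbox z₁ w a3 a4 a1 a2) hs2 (hbox z₂ w a5 a6 a1 a2)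
    1 rfl (z, w) rfl ?_
  intro k' hk'
  fin_cases k'
  · show min z₁ z₂ < z ∧ z < max z₁ z₂
    omega
  · simp at hk'
lemma coreA (S : Set (ℤ × ℤ)) (x y x' y' u v : ℤ)
    (hP : LP S x y u v) (hP' : LP S x' y' u v)
    (fillV : ∀ c z₁ z₂, min x (min x' u) ≤ c → c ≤ max x (max x' u) →
      min y (min y' v) ≤ z₁ → z₁ ≤ max y (max y' v) →
      min y (min y' v) ≤ z₂ → z₂ ≤ max y (max y' v) →
      (c, z₁) ∈ S → (c, z₂) ∈ S → ∀ z, min z₁ z₂ ≤ z → z ≤ max z₁ z₂ → (c, z) ∈ S)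
    (fillH : ∀ w z₁ z₂, min y (min y' v) ≤ w → w ≤ max y (max y' v) →
      min x (min x' u) ≤ z₁ → z₁ ≤ max x (max x' u) →
      min x (min x' u) ≤ z₂ → z₂ ≤ max x (max x' u) →
      (z₁, w) ∈ S → (z₂, w) ∈ S → ∀ z, min z₁ z₂ ≤ z → z ≤ max z₁ z₂ → (z, w) ∈ S)
    (hx : min x u ≤ x' ∧ x' ≤ max x u) :
    ∃ ch r, ShortestChainIn S ch r (x, y) (x', y') := by
  have hqS : (x, y) ∈ S := LP_left_mem hP
  have hq'S : (x', y') ∈ S := LP_left_mem hP'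
  rcases hP with ⟨hr, hv⟩ | ⟨hv, hr⟩
  · -- P horizontal first: row y from x to u, column u from y to v
    have h1 : (x', y) ∈ S := hr x' (by omega) (by omega)
    have hcol : ∀ z, min y y' ≤ z → z ≤ max y y' → (x', z) ∈ S :=
      fillV x' y y' (by omega) (by omega) (by omega) (by omega) (by omega) (by omega) h1 hq'S
    obtain ⟨c1, r1, hc1⟩ := shortest_seg_h S (x, y) (x', y) rfl
      (fun z a1 a2 => hr z (by omega) (by omega))
    obtain ⟨c2, r2, hc2⟩ := shortest_seg_v S (x', y) (x', y') rfl hcol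
    refine shortest_concat S hc1 hc2 ?_
    simp only [lnorm, Prod.mk_sub_mk, Prod.fst, Prod.snd, Int.abs_eq_natAbs]
    omega
  · -- P vertical first: column x from y to v, row v from x to u
    by_cases hvb : min y y' ≤ v ∧ v ≤ max y y'
    · -- v between y and y'
      have h1 : (x', v) ∈ S := hr x' (by omega) (by omega)
      have hcol : ∀ z, min v y' ≤ z → z ≤ max v y' → (x', z) ∈ S :=
        fillV x' v y' (by omega) (by omega) (by omega) (by omega) (by omega) (by omega) h1 hq'S
      obtain ⟨c1, r1, hc1⟩ := shortest_seg_v S (x, y) (x, v) rfl hv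
      obtain ⟨c2, r2, hc2⟩ := shortest_seg_h S (x, v) (x', v) rfl
        (fun z a1 a2 => hr z (by omega) (by omega))
      obtain ⟨c12, r12, hc12⟩ := shortest_concat S hc1 hc2 (by
        simp only [lnorm, Prod.mk_sub_mk, Prod.fst, Prod.snd, Int.abs_eq_natAbs]; omega)
      obtain ⟨c3, r3, hc3⟩ := shortest_seg_v S (x', v) (x', y') rfl hcol
      refine shortest_concat S hc12 hc3 ?_
      simp only [lnorm, Prod.mk_sub_mk, Prod.fst, Prod.snd, Int.abs_eq_natAbs]
      omega
    · by_cases hy'b : min y v ≤ y' ∧ y' ≤ max y v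
      · -- y' between y and v
        have h1 : (x, y') ∈ S := hv y' (by omega) (by omega)
        have hrow : ∀ z, min x x' ≤ z → z ≤ max x x' → (z, y') ∈ S :=
          fillH y' x x' (by omega) (by omega) (by omega) (by omega) (by omega) (by omega) h1 hq'S
        obtain ⟨c1, r1, hc1⟩ := shortest_seg_v S (x, y) (x, y') rfl
          (fun z a1 a2 => hv z (by omega) (by omega))
        obtain ⟨c2, r2, hc2⟩ := shortest_seg_h S (x, y') (x', y') rfl hrow
        refine shortest_concat S hc1 hc2 ?_
        simp only [lnorm, Prod.mk_sub_mk, Prod.fst, Prod.snd, Int.abs_eq_natAbs]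
        omega
      · -- y between y' and v
        have hyb : min y' v ≤ y ∧ y ≤ max y' v := by omega
        rcases hP' with ⟨hr', hv'⟩ | ⟨hv', hr'⟩
        · -- P' horizontal first: row y' from x' to u, column u from y' to v
          have h1 : (u, y) ∈ S := hv' y (by omega) (by omega)
          have hrow : ∀ z, min x u ≤ z → z ≤ max x u → (z, y) ∈ S :=
            fillH y x u (by omega) (by omega) (by omega) (by omega) (by omega) (by omega) hqS h1
          have h2 : (x', y) ∈ S := hrow x' (by omega) (by omega)
          have hcol : ∀ z, min y y' ≤ z → z ≤ max y y' → (x', z) ∈ S :=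
            fillV x' y y' (by omega) (by omega) (by omega) (by omega) (by omega) (by omega) h2 hq'S
          obtain ⟨c1, r1, hc1⟩ := shortest_seg_h S (x, y) (x', y) rfl
            (fun z a1 a2 => hrow z (by omega) (by omega))
          obtain ⟨c2, r2, hc2⟩ := shortest_seg_v S (x', y) (x', y') rfl hcol
          refine shortest_concat S hc1 hc2 ?_
          simp only [lnorm, Prod.mk_sub_mk, Prod.fst, Prod.snd, Int.abs_eq_natAbs]
          omega
        · -- P' vertical first: column x' from y' to v, row v from x' to u
          have h2 : (x', y) ∈ S := hv' y (by omega) (by omega)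
          have hrow : ∀ z, min x x' ≤ z → z ≤ max x x' → (z, y) ∈ S :=
            fillH y x x' (by omega) (by omega) (by omega) (by omega) (by omega) (by omega) hqS h2
          obtain ⟨c1, r1, hc1⟩ := shortest_seg_h S (x, y) (x', y) rfl hrow
          obtain ⟨c2, r2, hc2⟩ := shortest_seg_v S (x', y) (x', y') rfl
            (fun z a1 a2 => hv' z (by omega) (by omega))
          refine shortest_concat S hc1 hc2 ?_
          simp only [lnorm, Prod.mk_sub_mk, Prod.fst, Prod.snd, Int.abs_eq_natAbs]
          omega
lemma LP_swap {S : Set (ℤ × ℤ)} {x y u v : ℤ} (h : LP S x y u v) :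
    LP {p : ℤ × ℤ | (p.2, p.1) ∈ S} y x v u := by
  rcases h with ⟨hr, hv⟩ | ⟨hv, hr⟩
  · exact Or.inr ⟨fun z a b => hr z a b, fun z a b => hv z a b⟩
  · exact Or.inl ⟨fun z a b => hv z a b, fun z a b => hr z a b⟩

lemma core (S : Set (ℤ × ℤ)) (x y x' y' u v : ℤ)
    (hP : LP S x y u v) (hP' : LP S x' y' u v)
    (fillV : ∀ c z₁ z₂, min x (min x' u) ≤ c → c ≤ max x (max x' u) →
      min y (min y' v) ≤ z₁ → z₁ ≤ max y (max y' v) →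
      min y (min y' v) ≤ z₂ → z₂ ≤ max y (max y' v) →
      (c, z₁) ∈ S → (c, z₂) ∈ S → ∀ z, min z₁ z₂ ≤ z → z ≤ max z₁ z₂ → (c, z) ∈ S)
    (fillH : ∀ w z₁ z₂, min y (min y' v) ≤ w → w ≤ max y (max y' v) →
      min x (min x' u) ≤ z₁ → z₁ ≤ max x (max x' u) →
      min x (min x' u) ≤ z₂ → z₂ ≤ max x (max x' u) →
      (z₁, w) ∈ S → (z₂, w) ∈ S → ∀ z, min z₁ z₂ ≤ z → z ≤ max z₁ z₂ → (z, w) ∈ S) :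
    ∃ ch r, ShortestChainIn S ch r (x, y) (x', y') := by
  by_cases hx1 : min x u ≤ x' ∧ x' ≤ max x u
  · exact coreA S x y x' y' u v hP hP' fillV fillH hx1
  by_cases hx2 : min x' u ≤ x ∧ x ≤ max x' u
  · obtain ⟨ch, r, hc⟩ := coreA S x' y' x y u v hP' hP
      (fun c z₁ z₂ a1 a2 a3 a4 a5 a6 =>
        fillV c z₁ z₂ (by omega) (by omega) (by omega) (by omega) (by omega) (by omega))
      (fun w z₁ z₂ a1 a2 a3 a4 a5 a6 =>
        fillH w z₁ z₂ (by omega) (by omega) (by omega) (by omega) (by omega) (by omega)) hx2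
    exact shortest_rev S hc
  by_cases hy1 : min y v ≤ y' ∧ y' ≤ max y v
  · obtain ⟨ch, r, hc⟩ := coreA {p : ℤ × ℤ | (p.2, p.1) ∈ S} y x y' x' v u
      (LP_swap hP) (LP_swap hP')
      (fun c z₁ z₂ a1 a2 a3 a4 a5 a6 h1 h2 => fillH c z₁ z₂ a1 a2 a3 a4 a5 a6 h1 h2)
      (fun w z₁ z₂ a1 a2 a3 a4 a5 a6 h1 h2 => fillV w z₁ z₂ a1 a2 a3 a4 a5 a6 h1 h2)
      hy1
    obtain ⟨ch', r', hc'⟩ := shortest_swap hc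
    exact ⟨ch', r', hc'⟩
  by_cases hy2 : min y' v ≤ y ∧ y ≤ max y' v
  · obtain ⟨ch, r, hc⟩ := coreA {p : ℤ × ℤ | (p.2, p.1) ∈ S} y' x' y x v u
      (LP_swap hP') (LP_swap hP)
      (fun c z₁ z₂ a1 a2 a3 a4 a5 a6 h1 h2 =>
        fillH c z₁ z₂ (by omega) (by omega) (by omega) (by omega) (by omega) (by omega) h1 h2)
      (fun w z₁ z₂ a1 a2 a3 a4 a5 a6 h1 h2 =>
        fillV w z₁ z₂ (by omega) (by omega) (by omega) (by omega) (by omega) (by omega) h1 h2)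
      hy2
    obtain ⟨ch', r', hc'⟩ := shortest_swap hc
    exact shortest_rev S hc'
  · -- t is strictly inside the rectangle
    obtain ⟨c1, r1, hc1⟩ := LP_shortest hP
    obtain ⟨c2, r2, hc2⟩ := LP_shortest hP'
    obtain ⟨c2', r2', hc2'⟩ := shortest_rev S hc2
    refine shortest_concat S hc1 hc2' ?_
    have hu : min x x' ≤ u ∧ u ≤ max x x' := by omega
    have hv2 : min y y' ≤ v ∧ v ≤ max y y' := by omega
    clear hx1 hx2 hy1 hy2
    simp only [lnorm, Prod.mk_sub_mk, Prod.fst, Prod.snd, Int.abs_eq_natAbs]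
    omega
/-- Let `C_{i,j}` be an L-chain in `S` between `i` and `j`, let
`t ∈ C_{i,j}`, and let `C_{l,t}` be an L-chain in `S` between `l` and `t`.
If `q ∈ C_{i,j}` and `q' ∈ C_{l,t}` satisfy `|q_k - q'_k| ≤ p_k + 1`,
`|q_k - t_k| ≤ p_k + 1` and `|q'_k - t_k| ≤ p_k + 1` for `k = 1, 2`, and `S`
is axis-filling on `B(q,q')`, then there is a shortest chain in `S` between
`q` and `q'`. -/
theorem no_problematic_pairs_between_lchains (S : Set (ℤ × ℤ)) (p₁ p₂ : ℕ)
    (i c₁ j l c₂ t q q' : ℤ × ℤ) (k₁ k₂ m₁ m₂ : Fin 2)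
    (h1 : IsLChain S i c₁ j k₁ k₂) (ht : InLChain i c₁ j k₁ k₂ t)
    (h2 : IsLChain S l c₂ t m₁ m₂)
    (hq : InLChain i c₁ j k₁ k₂ q) (hq' : InLChain l c₂ t m₁ m₂ q')
    (hqq'1 : |q.1 - q'.1| ≤ (p₁ : ℤ) + 1) (hqq'2 : |q.2 - q'.2| ≤ (p₂ : ℤ) + 1)
    (hqt1 : |q.1 - t.1| ≤ (p₁ : ℤ) + 1) (hqt2 : |q.2 - t.2| ≤ (p₂ : ℤ) + 1)
    (hq't1 : |q'.1 - t.1| ≤ (p₁ : ℤ) + 1) (hq't2 : |q'.2 - t.2| ≤ (p₂ : ℤ) + 1)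
    (haf : AxisFilling S (interBox p₁ p₂ q q')) :
    ∃ (ch : ℕ → ℤ × ℤ) (r : ℕ), ShortestChainIn S ch r q q' := by
  have hP : LP S q.1 q.2 t.1 t.2 := lchain_connect h1 hq ht
  have htt : InLChain l c₂ t m₁ m₂ t := by
    right
    exact ⟨fun k' hk' => (h2.2.2.2.2.2.2.1 k' hk').symm, min_le_right _ _, le_max_right _ _⟩
  have hP' : LP S q'.1 q'.2 t.1 t.2 := lchain_connect h2 hq' htt
  have fV := fill_col S p₁ p₂ q q' t hqq'1 hqq'2 hqt1 hqt2 hq't1 hq't2 haf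
  have fH := fill_row S p₁ p₂ q q' t hqq'1 hqq'2 hqt1 hqt2 hq't1 hq't2 haf
  obtain ⟨ch, r, hc⟩ := core S q.1 q.2 q'.1 q'.2 t.1 t.2 hP hP' fV fH
  exact ⟨ch, r, by simpa using hc⟩
end
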